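/- Let A be a unital ℚ(r,q)-algebra with invertible element T and element E satisfying the BMW relations T - T^{-1} = (q - q^{-1})(1 - E), E² = xE with x = 1 + (r - r^{-1})/(q - q^{-1}), and ET = TE = r^{-1}E. Define, for k ∈ ℕ, Y(k) := (-1/[k+1])·([k]·T - q^k + ((q^k - q^{-k})/(1 + r·q^{-2k+1}))·E), where [n] is the quantum integer. Then T·Y(1) = -q^{-1}·Y(1) and E·Y(1) = 0. -/

import Mathlib

noncomputable section

/-- The field ℚ(r,q) of rational functions in two indeterminates over ℚ. -/
abbrev Krq : Type := RatFunc (RatFunc ℚ)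

/-- The indeterminate q. -/
def q : Krq := RatFunc.C RatFunc.X

/-- The indeterminate r. -/
def r : Krq := RatFunc.X

/-- The BMW parameter x = 1 + (r - r⁻¹)/(q - q⁻¹). -/
def x : Krq := 1 + (r - r⁻¹) / (q - q⁻¹)

/-- The quantum integer [n] = (q^n - q^{-n})/(q - q⁻¹) in ℚ(r,q). -/
def qint (n : ℕ) : Krq := (q ^ n - q⁻¹ ^ n) / (q - q⁻¹)

/-- The Yang–Baxter element
Y(k) = (-1/[k+1])·([k]·T - q^k + ((q^k - q^{-k})/(1 + r·q^{-2k+1}))·E). -/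
def Ybx {A : Type*} [Ring A] [Algebra Krq A] (T E : A) (k : ℕ) : A :=
  (-(qint (k + 1))⁻¹) •
    ((qint k) • T - (q ^ k) • (1 : A)
      + ((q ^ k - q⁻¹ ^ k) / (1 + r * q ^ ((1 : ℤ) - 2 * k))) • E)

lemma hq0 : q ≠ 0 := by simp [q, RatFunc.X_ne_zero]
lemma hr0 : r ≠ 0 := RatFunc.X_ne_zero

lemma hX2 (p : Polynomial ℚ) (hp : p.natDegree = 0) :
    (RatFunc.X : RatFunc ℚ) ^ 2 ≠ algebraMap (Polynomial ℚ) (RatFunc ℚ) p := by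
  rw [← RatFunc.algebraMap_X (K := ℚ), ← map_pow]
  intro h
  have h1 := IsFractionRing.injective (Polynomial ℚ) (RatFunc ℚ) h
  have h2 := congrArg Polynomial.natDegree h1
  simp [Polynomial.natDegree_X_pow, hp] at h2

lemma hqsq1 : (q : Krq) ^ 2 ≠ 1 := by
  rw [q, ← map_pow, ← map_one RatFunc.C]
  intro h
  have h1 := (RatFunc.C : RatFunc ℚ →+* Krq).injective h
  rw [← map_one (algebraMap (Polynomial ℚ) (RatFunc ℚ))] at h1
  exact hX2 1 Polynomial.natDegree_one h1

lemma hqsq2 : (q : Krq) ^ 2 ≠ -1 := by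
  rw [q, ← map_pow, show (-1 : Krq) = RatFunc.C (-1) by simp]
  intro h
  have h1 := (RatFunc.C : RatFunc ℚ →+* Krq).injective h
  rw [show (-1 : RatFunc ℚ) = algebraMap (Polynomial ℚ) (RatFunc ℚ) (-1) by simp] at h1
  exact hX2 (-1) (by simp) h1

lemma hqq : q - q⁻¹ ≠ 0 := by
  intro h
  have h1 : q * (q - q⁻¹) = 0 := by rw [h, mul_zero]
  rw [mul_sub, mul_inv_cancel₀ hq0, sub_eq_zero, ← sq] at h1
  exact hqsq1 h1

lemma hq2 : q + q⁻¹ ≠ 0 := by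
  intro h
  have h1 : q * (q + q⁻¹) = 0 := by rw [h, mul_zero]
  rw [mul_add, mul_inv_cancel₀ hq0, ← sq] at h1
  exact hqsq2 (by linear_combination h1)

lemma hd : 1 + r * q⁻¹ ≠ 0 := by
  intro h
  have h1 : (1 + r * q⁻¹) * q = 0 := by rw [h, zero_mul]
  rw [add_mul, one_mul, mul_assoc, inv_mul_cancel₀ hq0, mul_one] at h1
  have hqr : r = -q := by linear_combination h1
  rw [r, q, ← RatFunc.algebraMap_X (K := RatFunc ℚ)] at hqr
  have h2 : (Polynomial.X : Polynomial (RatFunc ℚ)) = - Polynomial.C RatFunc.X := by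
    apply IsFractionRing.injective (Polynomial (RatFunc ℚ)) Krq
    simpa [RatFunc.algebraMap_C] using hqr
  have h3 := congrArg (Polynomial.coeff · 1) h2
  simp at h3

lemma hqr0 : q + r ≠ 0 := by
  intro h
  have hqr : r = -q := by linear_combination h
  rw [r, q, ← RatFunc.algebraMap_X (K := RatFunc ℚ)] at hqr
  have h2 : (Polynomial.X : Polynomial (RatFunc ℚ)) = - Polynomial.C RatFunc.X := by
    apply IsFractionRing.injective (Polynomial (RatFunc ℚ)) Krq
    simpa [RatFunc.algebraMap_C] using hqr
  have h3 := congrArg (Polynomial.coeff · 1) h2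
  simp at h3


/-- If T (invertible) and E satisfy the single-index BMW relations, then
T·Y(1) = -q⁻¹·Y(1) and E·Y(1) = 0. -/
theorem yang_baxter_eigenvalues {A : Type*} [Ring A] [Algebra Krq A]
    (T Tinv E : A) (hTl : T * Tinv = 1) (hTr : Tinv * T = 1)
    (hquad : T - Tinv = (q - q⁻¹) • ((1 : A) - E))
    (hE2 : E * E = x • E)
    (hET : E * T = r⁻¹ • E) (hTE : T * E = r⁻¹ • E) :
    T * Ybx T E 1 = (-q⁻¹) • Ybx T E 1 ∧ E * Ybx T E 1 = 0 := by
  have hq21 : (q:Krq)^2 - 1 ≠ 0 := sub_ne_zero.mpr hqsq1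
  have e1 : qint 1 = 1 := by rw [qint, pow_one, pow_one]; exact div_self hqq
  have e2 : qint 2 = q + q⁻¹ := by
    rw [qint, div_eq_iff hqq]
    field_simp [hq0]
    ring
  have e3 : (q:Krq) ^ ((1:ℤ) - 2 * ((1:ℕ):ℤ)) = q⁻¹ := by norm_num
  obtain ⟨c, hc⟩ : ∃ c : Krq, c = (q - q⁻¹)/(1 + r*q⁻¹) := ⟨_, rfl⟩
  have hY : Ybx T E 1 = (-(q+q⁻¹)⁻¹) •
      (T - q • (1:A) + c • E) := by
    rw [hc, Ybx]
    norm_num [e1, e2, e3]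
  have hsq : T * T = 1 + (q - q⁻¹) • T - ((q - q⁻¹) * r⁻¹) • E := by
    have h0 : T * T = T * Tinv + T * (T - Tinv) := by noncomm_ring
    rw [h0, hTl, hquad, mul_smul_comm, mul_sub, mul_one, hTE, smul_sub, smul_smul]
    abel
  have hcc : c = ((q:Krq)^2 - 1)/(q + r) := by
    rw [hc, div_eq_div_iff hd hqr0]
    field_simp [hq0, hqr0]
  have key1 : ((q:Krq) - q⁻¹) - q = -q⁻¹ := by ring
  have key2 : c * r⁻¹ - ((q:Krq) - q⁻¹) * r⁻¹ = -q⁻¹ * c := by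
    rw [hcc]
    field_simp [hq0, hr0, hqr0]
    ring
  have key3 : (-q⁻¹ : Krq) * q = -1 := by rw [neg_mul, inv_mul_cancel₀ hq0]
  have hxx : x = ((q:Krq) - q⁻¹ + r - r⁻¹) / (q - q⁻¹) := by
    rw [x, eq_div_iff hqq, add_mul, one_mul, div_mul_cancel₀ _ hqq]
    ring
  have key4 : (r⁻¹ : Krq) - q + c * x = 0 := by
    have h1 : c * x = (((q:Krq)^2-1) * (q - q⁻¹ + r - r⁻¹)) / ((q+r) * (q - q⁻¹)) := by
      rw [hcc, hxx, div_mul_div_comm]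
    have h2 : ((q:Krq)+r) * (q - q⁻¹) ≠ 0 := mul_ne_zero hqr0 hqq
    have h3 : (((q:Krq)^2-1) * (q - q⁻¹ + r - r⁻¹)) = (q - r⁻¹) * ((q+r) * (q - q⁻¹)) := by
      field_simp [hq0, hr0]
      ring
    have h4 : c * x = q - r⁻¹ := by rw [h1, h3, mul_div_cancel_right₀ _ h2]
    rw [h4]
    ring
  constructor
  · rw [hY]
    rw [mul_smul_comm, mul_add, mul_sub, mul_smul_comm, mul_one, mul_smul_comm, hTE, hsq]
    rw [smul_comm (-q⁻¹) (-(q+q⁻¹)⁻¹)]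
    congr 1
    have hT' : ((q:Krq) - q⁻¹) • T - q • T = (-q⁻¹ : Krq) • T := by
      rw [← sub_smul, key1]
    have hE' : c • r⁻¹ • E - (((q:Krq) - q⁻¹) * r⁻¹) • E = ((-q⁻¹ : Krq) * c) • E := by
      rw [smul_smul, ← sub_smul, key2]
    calc 1 + ((q:Krq) - q⁻¹) • T - (((q:Krq) - q⁻¹) * r⁻¹) • E - q • T + c • r⁻¹ • E
        = (((q:Krq) - q⁻¹) • T - q • T)
          + (c • r⁻¹ • E - (((q:Krq) - q⁻¹) * r⁻¹) • E) + 1 := by abel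
      _ = (-q⁻¹ : Krq) • T + ((-q⁻¹ : Krq) * c) • E + 1 := by rw [hT', hE']
      _ = (-q⁻¹ : Krq) • (T - q • (1:A) + c • E) := by
          rw [smul_add, smul_sub, smul_smul, smul_smul, key3]
          simp only [neg_smul, one_smul]
          abel
  · rw [hY]
    rw [mul_smul_comm, mul_add, mul_sub, mul_smul_comm, mul_one, mul_smul_comm, hET, hE2]
    rw [smul_smul, ← sub_smul, ← add_smul, key4, zero_smul, smul_zero]
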